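/- In a pricing equilibrium of a reduced morning-commute corridor network (one in which every bottleneck is non-false), the arrival-time windows are strictly nested: for every i ∈ {1,…,N−1}, 𝒯_i ⊂ 𝒯_{i+1}, i.e. t_{i+1}^- < t_i^- and t_i^+ < t_{i+1}^+. -/

import Mathlib

open MeasureTheory Finset Set
open scoped Classical

noncomputable section

/-- Basic corridor-network primitives: `N ≥ 1` bottlenecks, rush hour `[0,T]`,
capacities `μ`, demands `Q`, free-flow times `c`, and a continuous, strictly
quasi-convex schedule-delay function `s` with minimum `0` at `td ∈ (0,T)`. -/
def CorridorNet (N : ℕ) (T td : ℝ) (μ Q c : ℕ → ℝ) (s : ℝ → ℝ) : Prop :=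
  1 ≤ N ∧ 0 < T ∧ td ∈ Set.Ioo (0:ℝ) T ∧
  (∀ i ∈ Finset.Icc 1 N, 0 < μ i ∧ 0 < Q i ∧ 0 ≤ c i) ∧
  ContinuousOn s (Set.Icc 0 T) ∧ (∀ t ∈ Set.Icc (0:ℝ) T, 0 ≤ s t) ∧ s td = 0 ∧
  (∀ a ∈ Set.Icc (0:ℝ) T, ∀ b ∈ Set.Icc (0:ℝ) T, a ≠ b →
    ∀ l ∈ Set.Ioo (0:ℝ) 1, s (l * a + (1 - l) * b) < max (s a) (s b))

/-- Pricing equilibrium: bounded measurable nonnegative flows `q` and prices `p`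
with constants `ρ`, satisfying (E1), (E2), (E3). -/
def IsPricingEq (N : ℕ) (T : ℝ) (μ Q c : ℕ → ℝ) (s : ℝ → ℝ)
    (q p : ℕ → ℝ → ℝ) (ρ : ℕ → ℝ) : Prop :=
  (∀ i ∈ Finset.Icc 1 N, Measurable (q i) ∧ Measurable (p i)) ∧
  (∀ i ∈ Finset.Icc 1 N, ∃ M : ℝ, ∀ t ∈ Set.Icc (0:ℝ) T, q i t ≤ M ∧ p i t ≤ M) ∧
  (∀ i ∈ Finset.Icc 1 N, ∀ t ∈ Set.Icc (0:ℝ) T, 0 ≤ q i t ∧ 0 ≤ p i t) ∧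
  (∀ i ∈ Finset.Icc 1 N, ∀ t ∈ Set.Icc (0:ℝ) T,
    ρ i ≤ s t + c i + ∑ j ∈ Finset.Icc 1 i, p j t ∧
    (0 < q i t → s t + c i + ∑ j ∈ Finset.Icc 1 i, p j t = ρ i)) ∧
  (∀ i ∈ Finset.Icc 1 N, ∀ t ∈ Set.Icc (0:ℝ) T,
    (∑ j ∈ Finset.Icc i N, q j t) ≤ μ i ∧
    (0 < p i t → (∑ j ∈ Finset.Icc i N, q j t) = μ i)) ∧
  (∀ i ∈ Finset.Icc 1 N, ∫ t in (0:ℝ)..T, q i t = Q i)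

/-- `[a,b]` is the smallest closed interval containing `{t ∈ [0,T] : 0 < f t}`. -/
def IsWindow (T : ℝ) (f : ℝ → ℝ) (a b : ℝ) : Prop :=
  a ≤ b ∧
  {t | t ∈ Set.Icc (0:ℝ) T ∧ 0 < f t} ⊆ Set.Icc a b ∧
  ∀ a' b' : ℝ, {t | t ∈ Set.Icc (0:ℝ) T ∧ 0 < f t} ⊆ Set.Icc a' b' →
    Set.Icc a b ⊆ Set.Icc a' b'

/-- Bottleneck `i` is non-false: its price is positive at some time. -/
def NonFalse (T : ℝ) (p : ℕ → ℝ → ℝ) (i : ℕ) : Prop :=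
  ∃ t ∈ Set.Icc (0:ℝ) T, 0 < p i t

section Aux

variable {N : ℕ} {T td : ℝ} {μ Q c : ℕ → ℝ} {s : ℝ → ℝ}
  {q p : ℕ → ℝ → ℝ} {ρ : ℕ → ℝ} {tm tp : ℕ → ℝ}

lemma aux_Icc_succ (a b : ℕ) : Finset.Icc (a+1) b = Finset.Ioc a b := by
  ext x; simp only [Finset.mem_Icc, Finset.mem_Ioc]; omega

lemma aux_Icc_one (b : ℕ) : Finset.Icc 1 b = Finset.Ioc 0 b := aux_Icc_succ 0 b

lemma aux_pos_on (hnet : CorridorNet N T td μ Q c s) :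
    ∀ b ∈ Set.Icc (0:ℝ) T, b ≠ td → 0 < s b := by
  intro b hb hbne
  obtain ⟨_, _, htd, _, _, hpos, hmin, hqc⟩ := hnet
  have htd' : td ∈ Set.Icc (0:ℝ) T := ⟨le_of_lt htd.1, le_of_lt htd.2⟩
  have h := hqc td htd' b hb (fun h => hbne h.symm) (1/2) ⟨by norm_num, by norm_num⟩
  have hmidmem : (1/2 : ℝ) * td + (1 - 1/2) * b ∈ Set.Icc (0:ℝ) T := by
    constructor <;> nlinarith [htd'.1, htd'.2, hb.1, hb.2]
  have hb0 := hpos b hb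
  rw [hmin, max_eq_right hb0] at h
  linarith [hpos _ hmidmem]

lemma aux_sdec (hnet : CorridorNet N T td μ Q c s) {a b : ℝ}
    (ha : a ∈ Set.Icc (0:ℝ) T) (hb : b ∈ Set.Icc (0:ℝ) T)
    (hab : a < b) (hbtd : b ≤ td) : s b < s a := by
  have hnet' := hnet
  obtain ⟨_, _, htd, _, _, hpos, hmin, hqc⟩ := hnet'
  rcases eq_or_lt_of_le hbtd with h|hblt
  · have : s b = 0 := by rw [h, hmin]
    rw [this]
    exact aux_pos_on hnet a ha (by rw [← h]; exact ne_of_lt hab)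
  · have htd' : td ∈ Set.Icc (0:ℝ) T := ⟨le_of_lt htd.1, le_of_lt htd.2⟩
    have hta : 0 < td - a := by linarith
    set l : ℝ := (td - b)/(td - a) with hl
    have hl0 : 0 < l := div_pos (by linarith) hta
    have hl1 : l < 1 := (div_lt_one hta).2 (by linarith)
    have hcomb : l * a + (1 - l) * td = b := by rw [hl]; field_simp; ring
    have h := hqc a ha td htd' (by intro h; rw [h] at hab; linarith) l ⟨hl0, hl1⟩
    rw [hcomb, hmin, max_eq_left (hpos a ha)] at h
    exact h

lemma aux_sinc (hnet : CorridorNet N T td μ Q c s) {a b : ℝ}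
    (ha : a ∈ Set.Icc (0:ℝ) T) (hb : b ∈ Set.Icc (0:ℝ) T)
    (hta : td ≤ a) (hab : a < b) : s a < s b := by
  have hnet' := hnet
  obtain ⟨_, _, htd, _, _, hpos, hmin, hqc⟩ := hnet'
  rcases eq_or_lt_of_le hta with h|halt
  · have : s a = 0 := by rw [← h, hmin]
    rw [this]
    exact aux_pos_on hnet b hb (by rw [h]; exact (ne_of_lt hab).symm)
  · have htd' : td ∈ Set.Icc (0:ℝ) T := ⟨le_of_lt htd.1, le_of_lt htd.2⟩
    have htb : 0 < b - td := by linarith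
    set l : ℝ := (b - a)/(b - td) with hl
    have hl0 : 0 < l := div_pos (by linarith) htb
    have hl1 : l < 1 := (div_lt_one htb).2 (by linarith)
    have hcomb : l * td + (1 - l) * b = a := by rw [hl]; field_simp; ring
    have h := hqc td htd' b hb (by intro h; rw [← h] at hab; linarith) l ⟨hl0, hl1⟩
    rw [hcomb, hmin, max_eq_right (hpos b hb)] at h
    exact h

lemma aux_window_subset {f : ℝ → ℝ} {a b : ℝ} (h : IsWindow T f a b) :
    Set.Icc a b ⊆ Set.Icc 0 T :=
  h.2.2 0 T (fun t ht => ht.1)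

lemma aux_supp_nonempty {f : ℝ → ℝ} {a b : ℝ} (h : IsWindow T f a b) :
    ∃ t ∈ Set.Icc (0:ℝ) T, 0 < f t := by
  by_contra hc
  push_neg at hc
  have hsub : {t | t ∈ Set.Icc (0:ℝ) T ∧ 0 < f t} ⊆ Set.Icc (1:ℝ) 0 := by
    intro t ht
    exact absurd ht.2 (not_lt.2 (hc t ht.1))
  have hmem := h.2.2 1 0 hsub (Set.left_mem_Icc.2 h.1)
  have h1 := hmem.1
  have h2 := hmem.2
  linarith

lemma aux_tm_lt_td (hnet : CorridorNet N T td μ Q c s)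
    (heq : IsPricingEq N T μ Q c s q p ρ)
    {i : ℕ} (hi : i ∈ Finset.Icc 1 N)
    (hwini : IsWindow T (q i) (tm i) (tp i))
    (hregi : s (tm i) = ρ i - c i ∧ s (tp i) = ρ i - c i) :
    tm i < td ∧ td < tp i := by
  have hnet' := hnet
  obtain ⟨hN, hT, htd, hmuQ, hcont, hpos, hmin, hqc⟩ := hnet'
  have heq' := heq
  obtain ⟨hmeas, hbdd, hnn, hE1, hE2, hE3⟩ := heq'
  have hQpos : 0 < Q i := (hmuQ i hi).2.1
  have hsubT := aux_window_subset hwini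
  have htmT : tm i ∈ Set.Icc (0:ℝ) T := hsubT (Set.left_mem_Icc.2 hwini.1)
  have htpT : tp i ∈ Set.Icc (0:ℝ) T := hsubT (Set.right_mem_Icc.2 hwini.1)
  have hlt : tm i < tp i := by
    rcases lt_or_eq_of_le hwini.1 with h|h
    · exact h
    · exfalso
      have hzero : ∫ t in (0:ℝ)..T, q i t = 0 := by
        rw [intervalIntegral.integral_of_le (le_of_lt hT)]
        have hae : ∀ᵐ t ∂(MeasureTheory.volume.restrict (Set.Ioc (0:ℝ) T)), q i t = 0 := by
          rw [MeasureTheory.ae_restrict_iff' measurableSet_Ioc, MeasureTheory.ae_iff]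
          refine measure_mono_null (fun t ht => ?_) (measure_singleton (tm i))
          simp only [Set.mem_setOf_eq, Classical.not_imp] at ht
          obtain ⟨htI, hq⟩ := ht
          have h1 : t ∈ Set.Icc (0:ℝ) T := ⟨le_of_lt htI.1, htI.2⟩
          have h2 : 0 < q i t := lt_of_le_of_ne ((hnn i hi t h1).1) (Ne.symm hq)
          have h3 := hwini.2.1 ⟨h1, h2⟩
          rw [← h] at h3
          have : t = tm i := le_antisymm h3.2 h3.1
          simpa using this
        apply MeasureTheory.integral_eq_zero_of_ae
        filter_upwards [hae] with t ht using ht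
      rw [hE3 i hi] at hzero
      linarith
  constructor
  · by_contra hc
    push_neg at hc
    have := aux_sinc hnet htmT htpT hc hlt
    rw [hregi.1, hregi.2] at this
    exact lt_irrefl _ this
  · by_contra hc
    push_neg at hc
    have := aux_sdec hnet htmT htpT hlt hc
    rw [hregi.1, hregi.2] at this
    exact lt_irrefl _ this

lemma aux_v_step (heq : IsPricingEq N T μ Q c s q p ρ)
    (hwin : ∀ i ∈ Finset.Icc 1 N, IsWindow T (q i) (tm i) (tp i))
    {k : ℕ} (hk : 1 ≤ k) (hk1 : k + 1 ≤ N) :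
    ρ k - c k ≤ ρ (k+1) - c (k+1) := by
  obtain ⟨hmeas, hbdd, hnn, hE1, hE2, hE3⟩ := heq
  have hk1m : k + 1 ∈ Finset.Icc 1 N := Finset.mem_Icc.2 ⟨by omega, hk1⟩
  have hkm : k ∈ Finset.Icc 1 N := Finset.mem_Icc.2 ⟨hk, by omega⟩
  obtain ⟨t, htT, hqt⟩ := aux_supp_nonempty (hwin (k+1) hk1m)
  have heq1 := (hE1 (k+1) hk1m t htT).2 hqt
  have hge := (hE1 k hkm t htT).1
  have hsplit : ∑ j ∈ Finset.Icc 1 (k+1), p j t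
      = (∑ j ∈ Finset.Icc 1 k, p j t) + p (k+1) t := by
    rw [aux_Icc_one (k+1), aux_Icc_one k, Finset.sum_Ioc_succ_top (Nat.zero_le k)]
  have hp := (hnn (k+1) hk1m t htT).2
  linarith

lemma aux_v_mono (heq : IsPricingEq N T μ Q c s q p ρ)
    (hwin : ∀ i ∈ Finset.Icc 1 N, IsWindow T (q i) (tm i) (tp i)) :
    ∀ i j : ℕ, 1 ≤ i → i ≤ j → j ≤ N → ρ i - c i ≤ ρ j - c j := by
  intro i j hi hij
  induction j, hij using Nat.le_induction with
  | base => intro _; exact le_refl _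
  | succ j hij IH =>
      intro hj1
      have hjN : j ≤ N := Nat.le_of_succ_le hj1
      exact le_trans (IH hjN) (aux_v_step heq hwin (le_trans hi hij) hj1)

lemma aux_v_strict (hnet : CorridorNet N T td μ Q c s)
    (heq : IsPricingEq N T μ Q c s q p ρ)
    (hwin : ∀ i ∈ Finset.Icc 1 N, IsWindow T (q i) (tm i) (tp i))
    (hred : ∀ i ∈ Finset.Icc 1 N, NonFalse T p i)
    {i : ℕ} (hi : 1 ≤ i) (hiN : i < N) :
    ρ i - c i < ρ (i+1) - c (i+1) := by
  by_contra hc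
  push_neg at hc
  have hvm := aux_v_mono heq hwin
  have hveq : ρ (i+1) - c (i+1) = ρ i - c i :=
    le_antisymm hc (aux_v_step heq hwin hi hiN)
  have hnet' := hnet
  obtain ⟨hN, hT, htd, hmuQ, hcont, hpos, hmin, hqc⟩ := hnet'
  have heq' := heq
  obtain ⟨hmeas, hbdd, hnn, hE1, hE2, hE3⟩ := heq'
  have hi1I : i + 1 ∈ Finset.Icc 1 N := Finset.mem_Icc.2 ⟨by omega, hiN⟩
  obtain ⟨ts, htsT, hpts⟩ := hred (i+1) hi1I
  set S := (Finset.Icc (i+1) N).filter (fun k => ρ k - c k ≤ ρ i - c i) with hS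
  have hiS : i + 1 ∈ S :=
    Finset.mem_filter.2 ⟨Finset.mem_Icc.2 ⟨le_refl _, hiN⟩, le_of_eq hveq⟩
  have hSne : S.Nonempty := ⟨i+1, hiS⟩
  set m := S.max' hSne with hm
  have hmS : m ∈ S := S.max'_mem hSne
  have hmIcc := (Finset.mem_filter.1 hmS).1
  have hmle : ρ m - c m ≤ ρ i - c i := (Finset.mem_filter.1 hmS).2
  have him : i + 1 ≤ m := (Finset.mem_Icc.1 hmIcc).1
  have hmN : m ≤ N := (Finset.mem_Icc.1 hmIcc).2
  have hvm_eq : ∀ j, i + 1 ≤ j → j ≤ m → ρ j - c j = ρ i - c i := by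
    intro j hj1 hjm
    have h1 : ρ i - c i ≤ ρ j - c j := hvm i j hi (by omega) (by omega)
    have h2 : ρ j - c j ≤ ρ m - c m := hvm j m (by omega) hjm hmN
    linarith
  -- Step 1: q j ts = 0 for i+1 ≤ j ≤ m
  have hq0 : ∀ j, i + 1 ≤ j → j ≤ m → q j ts = 0 := by
    intro j hj1 hjm
    by_contra hq
    have hjI : j ∈ Finset.Icc 1 N := Finset.mem_Icc.2 ⟨by omega, by omega⟩
    have hiI : i ∈ Finset.Icc 1 N := Finset.mem_Icc.2 ⟨hi, by omega⟩
    have hqpos : 0 < q j ts := lt_of_le_of_ne ((hnn j hjI ts htsT).1) (Ne.symm hq)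
    have heqj := (hE1 j hjI ts htsT).2 hqpos
    have hgei := (hE1 i hiI ts htsT).1
    have hsplit : (∑ k ∈ Finset.Icc 1 i, p k ts) + ∑ k ∈ Finset.Ioc i j, p k ts
        = ∑ k ∈ Finset.Icc 1 j, p k ts := by
      rw [aux_Icc_one j, aux_Icc_one i]
      exact Finset.sum_Ioc_consecutive _ (Nat.zero_le i) (by omega)
    have hple : p (i+1) ts ≤ ∑ k ∈ Finset.Ioc i j, p k ts := by
      refine Finset.single_le_sum (f := fun k => p k ts) ?_ ?_
      · intro k hk
        have hkk := Finset.mem_Ioc.1 hk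
        have hkI : k ∈ Finset.Icc 1 N := Finset.mem_Icc.2 ⟨by omega, by omega⟩
        exact (hnn k hkI ts htsT).2
      · exact Finset.mem_Ioc.2 ⟨by omega, hj1⟩
    have hvj := hvm_eq j hj1 hjm
    linarith
  -- Step 2
  have hstar : ∑ j ∈ Finset.Icc (i+1) N, q j ts = μ (i+1) :=
    (hE2 (i+1) hi1I ts htsT).2 hpts
  have hsplit2 : ∑ j ∈ Finset.Icc (i+1) N, q j ts = ∑ j ∈ Finset.Ioc m N, q j ts := by
    rw [aux_Icc_succ i N,
      ← Finset.sum_Ioc_consecutive (fun j => q j ts) (by omega : i ≤ m) hmN]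
    have hz : ∑ j ∈ Finset.Ioc i m, q j ts = 0 :=
      Finset.sum_eq_zero (fun j hj => hq0 j (Finset.mem_Ioc.1 hj).1 (Finset.mem_Ioc.1 hj).2)
    rw [hz, zero_add]
  have hmltN : m < N := by
    by_contra h
    have hmn : m = N := by omega
    rw [hmn] at hsplit2
    rw [Finset.Ioc_self, Finset.sum_empty] at hsplit2
    have hμ : 0 < μ (i+1) := (hmuQ (i+1) hi1I).1
    rw [hstar] at hsplit2
    linarith
  have hm1I : m + 1 ∈ Finset.Icc 1 N := Finset.mem_Icc.2 ⟨by omega, hmltN⟩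
  have hle_mu : μ (i+1) ≤ μ (m+1) := by
    have h2 := (hE2 (m+1) hm1I ts htsT).1
    rw [aux_Icc_succ m N] at h2
    rw [hstar] at hsplit2
    linarith
  -- Step 3
  have hvm1 : ρ m - c m < ρ (m+1) - c (m+1) := by
    have hle := aux_v_step heq hwin (by omega : 1 ≤ m) hmltN
    rcases lt_or_eq_of_le hle with h|h
    · exact h
    · exfalso
      have hmem : m + 1 ∈ S := Finset.mem_filter.2
        ⟨Finset.mem_Icc.2 ⟨by omega, hmltN⟩, by rw [← h]; exact hmle⟩
      have := S.le_max' _ hmem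
      omega
  -- Step 4
  have hmI : m ∈ Finset.Icc 1 N := Finset.mem_Icc.2 ⟨by omega, hmN⟩
  obtain ⟨t', ht'T, hqm⟩ := aux_supp_nonempty (hwin m hmI)
  have heqm := (hE1 m hmI t' ht'T).2 hqm
  have hgem1 := (hE1 (m+1) hm1I t' ht'T).1
  have hsplit3 : ∑ k ∈ Finset.Icc 1 (m+1), p k t'
      = (∑ k ∈ Finset.Icc 1 m, p k t') + p (m+1) t' := by
    rw [aux_Icc_one (m+1), aux_Icc_one m, Finset.sum_Ioc_succ_top (Nat.zero_le m)]
  have hpm1 : 0 < p (m+1) t' := by linarith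
  have hcap : ∑ j ∈ Finset.Icc (m+1) N, q j t' = μ (m+1) :=
    (hE2 (m+1) hm1I t' ht'T).2 hpm1
  have hcap2 := (hE2 (i+1) hi1I t' ht'T).1
  have hsplit4 : ∑ j ∈ Finset.Icc (i+1) N, q j t'
      = (∑ j ∈ Finset.Ioc i m, q j t') + ∑ j ∈ Finset.Ioc m N, q j t' := by
    rw [aux_Icc_succ i N,
      ← Finset.sum_Ioc_consecutive (fun j => q j t') (by omega : i ≤ m) hmN]
  have hqm_le : q m t' ≤ ∑ j ∈ Finset.Ioc i m, q j t' := by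
    refine Finset.single_le_sum (f := fun j => q j t') ?_ ?_
    · intro k hk
      have hkk := Finset.mem_Ioc.1 hk
      exact (hnn k (Finset.mem_Icc.2 ⟨by omega, by omega⟩) t' ht'T).1
    · exact Finset.mem_Ioc.2 ⟨by omega, le_refl m⟩
  have hcap' : ∑ j ∈ Finset.Ioc m N, q j t' = μ (m+1) := by
    rw [← aux_Icc_succ m N]; exact hcap
  linarith

end Aux

/-- in a reduced network (every bottleneck non-false) the
arrival-time windows are strictly nested. -/
theorem stmt5 (N : ℕ) (T td : ℝ) (μ Q c : ℕ → ℝ) (s : ℝ → ℝ)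
    (q p : ℕ → ℝ → ℝ) (ρ : ℕ → ℝ) (tm tp : ℕ → ℝ)
    (hnet : CorridorNet N T td μ Q c s)
    (heq : IsPricingEq N T μ Q c s q p ρ)
    (hwin : ∀ i ∈ Finset.Icc 1 N, IsWindow T (q i) (tm i) (tp i))
    (hreg : ∀ i ∈ Finset.Icc 1 N, s (tm i) = ρ i - c i ∧ s (tp i) = ρ i - c i)
    (hred : ∀ i ∈ Finset.Icc 1 N, NonFalse T p i)
    :
    ∀ i, 1 ≤ i → i < N → tm (i + 1) < tm i ∧ tp i < tp (i + 1) := by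
  intro i hi hiN
  have hiI : i ∈ Finset.Icc 1 N := Finset.mem_Icc.2 ⟨hi, le_of_lt hiN⟩
  have hi1I : i+1 ∈ Finset.Icc 1 N := Finset.mem_Icc.2 ⟨by omega, hiN⟩
  have hstrict := aux_v_strict hnet heq hwin hred hi hiN
  have h1 := aux_tm_lt_td hnet heq hiI (hwin i hiI) (hreg i hiI)
  have h2 := aux_tm_lt_td hnet heq hi1I (hwin (i+1) hi1I) (hreg (i+1) hi1I)
  have hw1 := aux_window_subset (hwin i hiI)
  have hw2 := aux_window_subset (hwin (i+1) hi1I)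
  have htm1 : tm i ∈ Set.Icc (0:ℝ) T := hw1 (Set.left_mem_Icc.2 (hwin i hiI).1)
  have htp1 : tp i ∈ Set.Icc (0:ℝ) T := hw1 (Set.right_mem_Icc.2 (hwin i hiI).1)
  have htm2 : tm (i+1) ∈ Set.Icc (0:ℝ) T := hw2 (Set.left_mem_Icc.2 (hwin (i+1) hi1I).1)
  have htp2 : tp (i+1) ∈ Set.Icc (0:ℝ) T := hw2 (Set.right_mem_Icc.2 (hwin (i+1) hi1I).1)
  have hr1 := hreg i hiI
  have hr2 := hreg (i+1) hi1I
  constructor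
  · by_contra hcon
    push_neg at hcon
    rcases lt_or_eq_of_le hcon with h|h
    · have := aux_sdec hnet htm1 htm2 h (le_of_lt h2.1)
      rw [hr1.1, hr2.1] at this
      linarith
    · have : ρ i - c i = ρ (i+1) - c (i+1) := by rw [← hr1.1, h, hr2.1]
      linarith
  · by_contra hcon
    push_neg at hcon
    rcases lt_or_eq_of_le hcon with h|h
    · have := aux_sinc hnet htp2 htp1 (le_of_lt h2.2) h
      rw [hr1.2, hr2.2] at this
      linarith
    · have : ρ i - c i = ρ (i+1) - c (i+1) := by rw [← hr1.2, ← h, hr2.2]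
      linarith
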